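/- (Reduction to the difference Painlevé V equation.) Let k ≥ 1 be an integer, s a nonnegative integer, and ξ, τ, b, b′, α, α′, β, β′ ∈ ℂ with ξ ≠ 0. Set Λ = diag(1, ξ), A = (k+b)·[[−1, −αβ],[1/(αβ), 1]], C = [[b, bβ],[(τ−ξb)/β, τ−ξb]], A′ = (k+b′)·[[−1, −α′β′],[1/(α′β′), 1]], C′ = [[b′, b′β′],[(τ−ξb′)/β′, τ−ξb′]]. Assume that for every ζ ∈ ℂ with ζ ≠ s+1: (I + (ζ−(s+1))^{−1}A)·(Λζ + C) = (Λζ + C′)·(I + (ζ−(s+1))^{−1}A′). Define f = −k − b + s/(1−α), f′ = −k − b′ + (s+1)/(1−α′), g = −α, g′ = −α′. Assume the genericity conditions: α, α′, β, β′ are nonzero; k+b ≠ 0 and k+b′ ≠ 0; b ≠ b′; α ≠ 1, α′ ≠ 1 and ξα ≠ 1; f′ ≠ 0, f′ + k + τ/ξ ≠ 0, f′ − 1 − s + k ≠ 0, and (1+ξg)f′ + k − s − 1 ≠ 0. Then: (i) f′ + f = −(k + τ/ξ) + s/(1+g) + (τ/ξ + s + 1)/(1 + ξg); (ii) g′·g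 = (f′−1−s)(f′−1−s+k) / (ξ·f′·(f′ + k + τ/ξ)); (iii) β′/β = −(ξg/g′)·((1+g′)f′ + (k+τ/ξ)g′ − s − 1)/((1+ξg)f′ + k − s − 1). -/

import Mathlib

open Matrix

noncomputable section

/-- 2×2 complex matrices. -/
abbrev Mat2 : Type := Matrix (Fin 2) (Fin 2) ℂ

set_option maxHeartbeats 1000000 in
/-- reduction of the compatibility condition to the difference Painlevé V
equation (the case `ξ ≠ 0`). -/
theorem stmt17 (k : ℕ) (hk : 1 ≤ k) (s : ℕ)
    (ξ τ b b' α α' β β' : ℂ) (hξ : ξ ≠ 0)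
    (hcomp : ∀ ζ : ℂ, ζ ≠ (s : ℂ) + 1 →
      (1 + (ζ - ((s : ℂ) + 1))⁻¹ •
          (((k : ℂ) + b) • (!![-1, -(α * β); (α * β)⁻¹, 1] : Mat2))) *
        (ζ • (Matrix.diagonal ![1, ξ] : Mat2) +
          !![b, b * β; (τ - ξ * b) / β, τ - ξ * b]) =
      (ζ • (Matrix.diagonal ![1, ξ] : Mat2) +
          !![b', b' * β'; (τ - ξ * b') / β', τ - ξ * b']) *
        (1 + (ζ - ((s : ℂ) + 1))⁻¹ •
          (((k : ℂ) + b') • (!![-1, -(α' * β'); (α' * β')⁻¹, 1] : Mat2))))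
    (f f' g g' : ℂ)
    (hf : f = -(k : ℂ) - b + (s : ℂ) / (1 - α))
    (hf' : f' = -(k : ℂ) - b' + ((s : ℂ) + 1) / (1 - α'))
    (hg : g = -α) (hg' : g' = -α')
    (hα : α ≠ 0) (hα' : α' ≠ 0) (hβ : β ≠ 0) (hβ' : β' ≠ 0)
    (hkb : (k : ℂ) + b ≠ 0) (hkb' : (k : ℂ) + b' ≠ 0)
    (hbb' : b ≠ b')
    (hα1 : α ≠ 1) (hα'1 : α' ≠ 1) (hξα : ξ * α ≠ 1)
    (hf'0 : f' ≠ 0) (hf'1 : f' + (k : ℂ) + τ / ξ ≠ 0)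
    (hf'2 : f' - 1 - (s : ℂ) + (k : ℂ) ≠ 0)
    (hf'3 : (1 + ξ * g) * f' + (k : ℂ) - (s : ℂ) - 1 ≠ 0) :
    f' + f = -((k : ℂ) + τ / ξ) + (s : ℂ) / (1 + g) + (τ / ξ + (s : ℂ) + 1) / (1 + ξ * g) ∧
    g' * g = (f' - 1 - (s : ℂ)) * (f' - 1 - (s : ℂ) + (k : ℂ)) /
      (ξ * f' * (f' + (k : ℂ) + τ / ξ)) ∧
    β' / β = -(ξ * g / g') *
      (((1 + g') * f' + ((k : ℂ) + τ / ξ) * g' - (s : ℂ) - 1) /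
        ((1 + ξ * g) * f' + (k : ℂ) - (s : ℂ) - 1)) := by
  subst hf hf' hg hg'
  have hom : (1:ℂ) - α ≠ 0 := sub_ne_zero.mpr (fun h => hα1 h.symm)
  have hom1 : (1:ℂ) - α' ≠ 0 := sub_ne_zero.mpr (fun h => hα'1 h.symm)
  have hoxi : (1:ℂ) - ξ*α ≠ 0 := sub_ne_zero.mpr (fun h => hξα h.symm)
  have hbb : b - b' ≠ 0 := sub_ne_zero.mpr hbb'
  -- extraction at ζ = s+2
  have hne1 : ((s:ℂ) + 2) ≠ (s:ℂ) + 1 := by intro h; norm_num at h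
  have hp := hcomp ((s:ℂ)+2) hne1
  rw [show ((s:ℂ)+2 - ((s:ℂ)+1)) = 1 by ring] at hp
  simp only [inv_one, one_smul] at hp
  have p00 := congrFun (congrFun hp 0) 0
  have p01 := congrFun (congrFun hp 0) 1
  have p10 := congrFun (congrFun hp 1) 0
  have p11 := congrFun (congrFun hp 1) 1
  simp only [Matrix.mul_apply, Fin.sum_univ_two, Matrix.add_apply, Matrix.smul_apply,
    Matrix.one_apply, Matrix.diagonal_apply, Matrix.cons_val', Matrix.cons_val_zero,
    Matrix.cons_val_one, Matrix.head_cons, Matrix.head_fin_const, Matrix.of_apply,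
    smul_eq_mul, Fin.isValue, ne_eq, zero_ne_one, not_false_eq_true, diagonal_apply_ne,
    one_ne_zero, diagonal_apply_eq, Matrix.empty_val', Matrix.cons_val_fin_one, Matrix.neg_apply, ↓reduceIte] at p00 p01 p10 p11
  field_simp at p00 p01 p10 p11
  -- extraction at ζ = s
  have hne2 : ((s:ℂ)) ≠ (s:ℂ) + 1 := by intro h; norm_num at h
  have hm := hcomp ((s:ℂ)) hne2
  rw [show ((s:ℂ) - ((s:ℂ)+1)) = -1 by ring] at hm
  simp only [inv_neg, inv_one, neg_smul, one_smul] at hm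
  have m00 := congrFun (congrFun hm 0) 0
  have m01 := congrFun (congrFun hm 0) 1
  have m10 := congrFun (congrFun hm 1) 0
  have m11 := congrFun (congrFun hm 1) 1
  simp only [Matrix.mul_apply, Fin.sum_univ_two, Matrix.add_apply, Matrix.smul_apply,
    Matrix.one_apply, Matrix.diagonal_apply, Matrix.cons_val', Matrix.cons_val_zero,
    Matrix.cons_val_one, Matrix.head_cons, Matrix.head_fin_const, Matrix.of_apply,
    smul_eq_mul, Fin.isValue, ne_eq, zero_ne_one, not_false_eq_true, diagonal_apply_ne,
    one_ne_zero, diagonal_apply_eq, Matrix.empty_val', Matrix.cons_val_fin_one, Matrix.neg_apply, ↓reduceIte] at m00 m01 m10 m11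
  field_simp at m00 m01 m10 m11
  have hoxi' : (1:ℂ) - α*ξ ≠ 0 := by rw [mul_comm]; exact hoxi
  refine ⟨?_, ?_, ?_⟩
  · rw [show (1:ℂ) + -α = 1 - α by ring, show (1:ℂ) + ξ * -α = 1 - ξ*α by ring]
    field_simp
    have key : ((b - b') * (β * β')) * ((-1 : ℂ) * ξ^2 * (k:ℂ) + (2 : ℂ) * α * ξ^2 * (k:ℂ) + (-1 : ℂ) * α * ξ^2 * τ + (-1 : ℂ) * α * ξ^3 + (-1 : ℂ) * α * ξ^3 * (s:ℂ) + (1 : ℂ) * α * ξ^3 * (k:ℂ) + (-1 : ℂ) * α^2 * ξ^2 * (k:ℂ) + (2 : ℂ) * α^2 * ξ^2 * τ + (2 : ℂ) * α^2 * ξ^3 + (2 : ℂ) * α^2 * ξ^3 * (s:ℂ) + (-2 : ℂ) * α^2 * ξ^3 * (k:ℂ) + (-1 : ℂ) * α^3 * ξ^2 * τ + (-1 : ℂ) * α^3 * ξ^3 + (-1 : ℂ) * α^3 * ξ^3 * (s:ℂ) + (1 : ℂ) * α^3 * ξ^3 * (k:ℂ) + (-1 : ℂ) * b * ξ^2 +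 (2 : ℂ) * b * α * ξ^2 + (1 : ℂ) * b * α * ξ^3 + (-1 : ℂ) * b * α^2 * ξ^2 + (-2 : ℂ) * b * α^2 * ξ^3 + (1 : ℂ) * b * α^3 * ξ^3 + (1 : ℂ) * α' * ξ^2 + (1 : ℂ) * α' * ξ^2 * (s:ℂ) + (1 : ℂ) * α' * ξ^2 * (k:ℂ) + (-2 : ℂ) * α' * α * ξ^2 + (-2 : ℂ) * α' * α * ξ^2 * (s:ℂ) + (-2 : ℂ) * α' * α * ξ^2 * (k:ℂ) + (1 : ℂ) * α' * α * ξ^2 * τ + (-1 : ℂ) * α' * α * ξ^3 * (k:ℂ) + (1 : ℂ) * α' * α^2 * ξ^2 + (1 : ℂ) * α' * α^2 * ξ^2 * (s:ℂ) + (1 : ℂ) * α' * α^2 * ξ^2 * (k:ℂ) + (-2 : ℂ) * α' * α^2 * ξ^2 * τ + (2 : ℂ) * α' * α^2 * ξ^3 * (k:ℂ) + (1 : ℂ) * α' * α^3 * ξ^2 * τ + (-1 : ℂ) * α' * α^3 * ξ^3 * (k:ℂ) + (1 : ℂ) * α' * b * ξ^2 + (-2 : ℂ) * α' * b * α * ξ^2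 + (-1 : ℂ) * α' * b * α * ξ^3 + (1 : ℂ) * α' * b * α^2 * ξ^2 + (2 : ℂ) * α' * b * α^2 * ξ^3 + (-1 : ℂ) * α' * b * α^3 * ξ^3 + (-1 : ℂ) * b' * ξ^2 + (2 : ℂ) * b' * α * ξ^2 + (1 : ℂ) * b' * α * ξ^3 + (-1 : ℂ) * b' * α^2 * ξ^2 + (-2 : ℂ) * b' * α^2 * ξ^3 + (1 : ℂ) * b' * α^3 * ξ^3 + (1 : ℂ) * b' * α' * ξ^2 + (-2 : ℂ) * b' * α' * α * ξ^2 + (-1 : ℂ) * b' * α' * α * ξ^3 + (1 : ℂ) * b' * α' * α^2 * ξ^2 + (2 : ℂ) * b' * α' * α^2 * ξ^3 + (-1 : ℂ) * b' * α' * α^3 * ξ^3) = 0 := by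
      linear_combination ((-1 : ℂ) * ξ^2 + (2 : ℂ) * α * ξ^2 + (-1 : ℂ) * α^2 * ξ^2) * p00 + ((-1 : ℂ) * ξ^2 + (2 : ℂ) * α * ξ^2 + (-1 : ℂ) * α^2 * ξ^2) * p11
    refine mul_right_cancel₀ (mul_ne_zero hξ hom) ?_
    linear_combination (mul_eq_zero.mp key).resolve_left
      (mul_ne_zero hbb (mul_ne_zero hβ hβ'))
  · rw [eq_div_iff (mul_ne_zero (mul_ne_zero hξ hf'0) hf'1)]
    field_simp
    have key : ((b - b') * (β * β')) * ((1 : ℂ) * α' * ξ * (k:ℂ) + (1 : ℂ) * α' * ξ * (k:ℂ) * (s:ℂ) + (1 : ℂ) * α' * α * ξ * τ + (1 : ℂ) * α' * α * ξ * τ * (s:ℂ) + (-1 : ℂ) * α' * α * ξ * τ * (k:ℂ) + (1 : ℂ) * α' * α * ξ^2 + (2 : ℂ) * α' * α * ξ^2 * (s:ℂ) + (1 : ℂ) * α' * α * ξ^2 * (s:ℂ)^2 + (-1 : ℂ) * α' * α * ξ^2 * (k:ℂ) + (-1 : ℂ) * α' * α * ξ^2 * (k:ℂ) * (s:ℂ)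 + (-1 : ℂ) * α'^2 * ξ + (-2 : ℂ) * α'^2 * ξ * (s:ℂ) + (-1 : ℂ) * α'^2 * ξ * (s:ℂ)^2 + (-3 : ℂ) * α'^2 * ξ * (k:ℂ) + (-3 : ℂ) * α'^2 * ξ * (k:ℂ) * (s:ℂ) + (-3 : ℂ) * α'^2 * α * ξ * τ + (-3 : ℂ) * α'^2 * α * ξ * τ * (s:ℂ) + (4 : ℂ) * α'^2 * α * ξ * τ * (k:ℂ) + (-2 : ℂ) * α'^2 * α * ξ^2 + (-4 : ℂ) * α'^2 * α * ξ^2 * (s:ℂ) + (-2 : ℂ) * α'^2 * α * ξ^2 * (s:ℂ)^2 + (3 : ℂ) * α'^2 * α * ξ^2 * (k:ℂ) + (3 : ℂ) * α'^2 * α * ξ^2 * (k:ℂ) * (s:ℂ) + (2 : ℂ) * α'^3 * ξ + (4 : ℂ) * α'^3 * ξ * (s:ℂ) + (2 : ℂ) * α'^3 * ξ * (s:ℂ)^2 + (3 : ℂ) * α'^3 * ξ * (k:ℂ) + (3 : ℂ) * α'^3 * ξ * (k:ℂ) * (s:ℂ) + (3 : ℂ) * α'^3 * α * ξ * τ + (3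 : ℂ) * α'^3 * α * ξ * τ * (s:ℂ) + (-6 : ℂ) * α'^3 * α * ξ * τ * (k:ℂ) + (1 : ℂ) * α'^3 * α * ξ^2 + (2 : ℂ) * α'^3 * α * ξ^2 * (s:ℂ) + (1 : ℂ) * α'^3 * α * ξ^2 * (s:ℂ)^2 + (-3 : ℂ) * α'^3 * α * ξ^2 * (k:ℂ) + (-3 : ℂ) * α'^3 * α * ξ^2 * (k:ℂ) * (s:ℂ) + (-1 : ℂ) * α'^4 * ξ + (-2 : ℂ) * α'^4 * ξ * (s:ℂ) + (-1 : ℂ) * α'^4 * ξ * (s:ℂ)^2 + (-1 : ℂ) * α'^4 * ξ * (k:ℂ) + (-1 : ℂ) * α'^4 * ξ * (k:ℂ) * (s:ℂ) + (-1 : ℂ) * α'^4 * α * ξ * τ + (-1 : ℂ) * α'^4 * α * ξ * τ * (s:ℂ) + (4 : ℂ) * α'^4 * α * ξ * τ * (k:ℂ) + (1 : ℂ) * α'^4 * α * ξ^2 * (k:ℂ) + (1 : ℂ) * α'^4 * α * ξ^2 * (k:ℂ) * (s:ℂ) + (-1 : ℂ) * α'^5 * α * ξ * τ * (k:ℂ)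 + (-1 : ℂ) * b' * ξ * (k:ℂ) + (2 : ℂ) * b' * α' * ξ + (2 : ℂ) * b' * α' * ξ * (s:ℂ) + (4 : ℂ) * b' * α' * ξ * (k:ℂ) + (-1 : ℂ) * b' * α' * α * ξ * τ + (-2 : ℂ) * b' * α' * α * ξ^2 + (-2 : ℂ) * b' * α' * α * ξ^2 * (s:ℂ) + (1 : ℂ) * b' * α' * α * ξ^2 * (k:ℂ) + (-6 : ℂ) * b' * α'^2 * ξ + (-6 : ℂ) * b' * α'^2 * ξ * (s:ℂ) + (-6 : ℂ) * b' * α'^2 * ξ * (k:ℂ) + (4 : ℂ) * b' * α'^2 * α * ξ * τ + (6 : ℂ) * b' * α'^2 * α * ξ^2 + (6 : ℂ) * b' * α'^2 * α * ξ^2 * (s:ℂ) + (-4 : ℂ) * b' * α'^2 * α * ξ^2 * (k:ℂ) + (6 : ℂ) * b' * α'^3 * ξ + (6 : ℂ) * b' * α'^3 * ξ * (s:ℂ) + (4 : ℂ) * b' * α'^3 * ξ * (k:ℂ) + (-6 : ℂ) * b' * α'^3 * α * ξ * τ + (-6 : ℂ) * b' * α'^3 * α * ξ^2 + (-6 : ℂ)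 * b' * α'^3 * α * ξ^2 * (s:ℂ) + (6 : ℂ) * b' * α'^3 * α * ξ^2 * (k:ℂ) + (-2 : ℂ) * b' * α'^4 * ξ + (-2 : ℂ) * b' * α'^4 * ξ * (s:ℂ) + (-1 : ℂ) * b' * α'^4 * ξ * (k:ℂ) + (4 : ℂ) * b' * α'^4 * α * ξ * τ + (2 : ℂ) * b' * α'^4 * α * ξ^2 + (2 : ℂ) * b' * α'^4 * α * ξ^2 * (s:ℂ) + (-4 : ℂ) * b' * α'^4 * α * ξ^2 * (k:ℂ) + (-1 : ℂ) * b' * α'^5 * α * ξ * τ + (1 : ℂ) * b' * α'^5 * α * ξ^2 * (k:ℂ) + (-1 : ℂ) * b'^2 * ξ + (4 : ℂ) * b'^2 * α' * ξ + (1 : ℂ) * b'^2 * α' * α * ξ^2 + (-6 : ℂ) * b'^2 * α'^2 * ξ + (-4 : ℂ) * b'^2 * α'^2 * α * ξ^2 + (4 : ℂ) * b'^2 * α'^3 * ξ + (6 : ℂ) * b'^2 * α'^3 * α * ξ^2 + (-1 : ℂ) * b'^2 * α'^4 * ξ + (-4 : ℂ) * b'^2 * α'^4 * α * ξ^2 +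 (1 : ℂ) * b'^2 * α'^5 * α * ξ^2) = 0 := by
      linear_combination ((1 : ℂ) * b * ξ + (1 : ℂ) * α' * ξ + (1 : ℂ) * α' * ξ * (s:ℂ) + (-3 : ℂ) * α' * b * ξ + (-2 : ℂ) * α'^2 * ξ + (-2 : ℂ) * α'^2 * ξ * (s:ℂ) + (3 : ℂ) * α'^2 * b * ξ + (1 : ℂ) * α'^3 * ξ + (1 : ℂ) * α'^3 * ξ * (s:ℂ) + (-1 : ℂ) * α'^3 * b * ξ + (-1 : ℂ) * b' * ξ + (3 : ℂ) * b' * α' * ξ + (-3 : ℂ) * b' * α'^2 * ξ + (1 : ℂ) * b' * α'^3 * ξ) * p00 + ((1 : ℂ) * α' * ξ + (1 : ℂ) * α' * ξ * (s:ℂ) + (1 : ℂ) * α' * b * ξ + (-2 : ℂ) * α'^2 * ξ + (-2 : ℂ) * α'^2 * ξ * (s:ℂ) + (-3 : ℂ) * α'^2 * b * ξ + (1 : ℂ) * α'^3 * ξ + (1 : ℂ) * α'^3 * ξ * (s:ℂ) + (3 : ℂ) * α'^3 * b * ξ + (-1 : ℂ) * α'^4 * b * ξ + (-1 : ℂ)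 * b' * α' * ξ + (3 : ℂ) * b' * α'^2 * ξ + (-3 : ℂ) * b' * α'^3 * ξ + (1 : ℂ) * b' * α'^4 * ξ) * p11
    refine mul_right_cancel₀ (mul_ne_zero hξ (pow_ne_zero 2 hom1)) ?_
    linear_combination (mul_eq_zero.mp key).resolve_left
      (mul_ne_zero hbb (mul_ne_zero hβ hβ'))
  · rw [div_eq_iff hβ]
    field_simp
    have hX : (1 + -(ξ * α)) * ((-(k:ℂ) - b') * (1 - α') + ((s:ℂ) + 1)) + (k:ℂ) * (1 - α') - (1 - α') * (s:ℂ) - (1 - α') ≠ 0 := by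
      intro h0
      apply hf'3
      field_simp
      linear_combination h0
    have hY : ((-(k:ℂ) - b') * (1 - α') + ((s:ℂ) + 1)) * (1 + -(ξ * α)) + (k:ℂ) * (1 - α') - (s:ℂ) * (1 - α') - (1 - α') ≠ 0 := by
      convert hX using 1; ring
    rw [← neg_div, eq_div_iff hY]
    have key : ((b - b') * (β * β')) * ((-1 : ℂ) * α * β * ξ^2 * (k:ℂ) + (-1 : ℂ) * α' * α * β * ξ * τ + (2 : ℂ) * α' * α * β * ξ^2 * (k:ℂ) + (-1 : ℂ) * α' * β' * α * ξ^2 + (-1 : ℂ) * α' * β' * α * ξ^2 * (s:ℂ) + (1 : ℂ) * α' * β' * α * ξ^2 * (k:ℂ) + (2 : ℂ) * α'^2 * α * β * ξ * τ + (-1 : ℂ) * α'^2 * α * β * ξ^2 * (k:ℂ) + (1 : ℂ) * α'^2 * β' * ξ + (1 : ℂ) * α'^2 * β' * ξ * (s:ℂ) + (1 : ℂ) * α'^2 * β' * α * ξ^2 + (1 : ℂ) * α'^2 * β' * α * ξ^2 * (s:ℂ) + (-2 : ℂ) * α'^2 * β' * α * ξ^2 * (k:ℂ) + (-1 : ℂ)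 * α'^3 * α * β * ξ * τ + (-1 : ℂ) * α'^3 * β' * ξ + (-1 : ℂ) * α'^3 * β' * ξ * (s:ℂ) + (1 : ℂ) * α'^3 * β' * α * ξ^2 * (k:ℂ) + (-1 : ℂ) * b' * α * β * ξ^2 + (3 : ℂ) * b' * α' * α * β * ξ^2 + (-1 : ℂ) * b' * α' * β' * ξ + (1 : ℂ) * b' * α' * β' * α * ξ^2 + (-3 : ℂ) * b' * α'^2 * α * β * ξ^2 + (2 : ℂ) * b' * α'^2 * β' * ξ + (-2 : ℂ) * b' * α'^2 * β' * α * ξ^2 + (1 : ℂ) * b' * α'^3 * α * β * ξ^2 + (-1 : ℂ) * b' * α'^3 * β' * ξ + (1 : ℂ) * b' * α'^3 * β' * α * ξ^2) = 0 := by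
      set_option maxRecDepth 100000 in
      linear_combination ((-2 : ℂ) * β * ξ + (-1 : ℂ) * β' * ξ + (1 : ℂ) * α' * β * ξ + (1 : ℂ) * α' * β' * ξ) * p00 + (((1 : ℂ)/2) * β' * b * β * ξ + (-1 : ℂ) * α' * β' * b * β * ξ + ((1 : ℂ)/2) * α'^2 * β' * b * β * ξ + ((-1 : ℂ)/2) * b' * β' * β * ξ + (1 : ℂ) * b' * α' * β' * β * ξ + ((-1 : ℂ)/2) * b' * α'^2 * β' * β * ξ) * p01 + ((1 : ℂ) * β * ξ + (1 : ℂ) * b * β * ξ + (-2 : ℂ) * α' * β * ξ + (-2 : ℂ) * α' * b * β * ξ + (-1 : ℂ) * α' * β' * ξ + (1 : ℂ) * α'^2 * β * ξ + (1 : ℂ) * α'^2 * b * β * ξ + (1 : ℂ) * α'^2 * β' * ξ + (-1 : ℂ) * b' * β * ξ + (2 : ℂ) * b' * α' * β * ξ + (-1 : ℂ) * b' * α'^2 * β * ξ) * p11 + ((-2 : ℂ) * β * ξ + (-1 : ℂ) * β' * ξ + (1 : ℂ) * β' * b * ξ + (1 : ℂ) * α' * β * ξ + (2 : ℂ) * α'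 * β' * ξ + (-2 : ℂ) * α' * β' * b * ξ + (-1 : ℂ) * α'^2 * β' * ξ + (1 : ℂ) * α'^2 * β' * b * ξ + (-1 : ℂ) * b' * β' * ξ + (2 : ℂ) * b' * α' * β' * ξ + (-1 : ℂ) * b' * α'^2 * β' * ξ) * m00 + (((-1 : ℂ)/2) * β' * b * β * ξ + (1 : ℂ) * α' * β' * b * β * ξ + ((-1 : ℂ)/2) * α'^2 * β' * b * β * ξ + ((1 : ℂ)/2) * b' * β' * β * ξ + (-1 : ℂ) * b' * α' * β' * β * ξ + ((1 : ℂ)/2) * b' * α'^2 * β' * β * ξ) * m01 + ((1 : ℂ) * b * ξ + (-2 : ℂ) * α' * b * ξ + (1 : ℂ) * α'^2 * b * ξ + (-1 : ℂ) * b' * ξ + (2 : ℂ) * b' * α' * ξ + (-1 : ℂ) * b' * α'^2 * ξ) * (β * β') * m10 + ((1 : ℂ) * β * ξ + (-2 : ℂ) * α' * β * ξ + (1 : ℂ) * α'^2 * β * ξ) * m11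
    refine mul_right_cancel₀ (mul_ne_zero hξ hom1) ?_
    linear_combination (mul_eq_zero.mp key).resolve_left
      (mul_ne_zero hbb (mul_ne_zero hβ hβ'))
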